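/- Let a : ℕ → ℕ → ℝ be an infinite matrix. Then a ∈ (c₀ : c) if and only if both of the following hold: (4.2) for each n the series Σ_k |a(n,k)| converges and sup_n Σ_k |a(n,k)| < ∞; (4.3) for each k the limit lim_{n→∞} a(n,k) exists. -/

import Mathlib

set_option maxHeartbeats 1000000
open Filter Topology
open scoped ZeroAtInfty

lemma sgn_abs (t : ℝ) : t * Real.sign t = |t| := by
  rcases lt_trichotomy t 0 with h | h | h
  · rw [Real.sign_of_neg h, abs_of_neg h]; ring
  · simp [h]
  · rw [Real.sign_of_pos h, abs_of_pos h]; ring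

lemma abs_sgn_le (t : ℝ) : |Real.sign t| ≤ 1 := by
  rcases Real.sign_apply_eq t with h | h | h <;> rw [h] <;> norm_num

lemma row_l1 (b : ℕ → ℝ)
    (h : ∀ x : ℕ → ℝ, Tendsto x atTop (𝓝 0) → Summable fun k => |b k * x k|) :
    Summable fun k => |b k| := by
  by_contra hns
  set S : ℕ → ℝ := fun n => ∑ i ∈ Finset.range n, |b i| with hSdef
  have hSmono : Monotone S := fun m n hmn =>
    Finset.sum_le_sum_of_subset_of_nonneg (Finset.range_subset_range.2 hmn)
      (fun i _ _ => abs_nonneg _)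
  have hS0 : ∀ n, 0 ≤ S n := fun n => Finset.sum_nonneg fun i _ => abs_nonneg _
  have hStop : Tendsto S atTop atTop :=
    (not_summable_iff_tendsto_nat_atTop_of_nonneg (fun n => abs_nonneg _)).1 hns
  set x : ℕ → ℝ := fun k => Real.sign (b k) / (1 + S (k + 1)) with hxdef
  have hpos : ∀ k, 0 < 1 + S (k + 1) := fun k => by linarith [hS0 (k + 1)]
  have hx0 : Tendsto x atTop (𝓝 0) := by
    have hg : Tendsto (fun k => (1 + S (k + 1))⁻¹) atTop (𝓝 0) := by
      apply Tendsto.inv_tendsto_atTop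
      apply tendsto_atTop_add_const_left
      exact hStop.comp (tendsto_add_atTop_nat 1)
    have habs : ∀ k, |x k| ≤ (1 + S (k + 1))⁻¹ := by
      intro k
      rw [hxdef]
      rw [abs_div, abs_of_pos (hpos k), div_le_iff₀ (hpos k)]
      calc |Real.sign (b k)| ≤ 1 := abs_sgn_le _
        _ = (1 + S (k+1))⁻¹ * (1 + S (k+1)) := by rw [inv_mul_cancel₀ (hpos k).ne']
    refine tendsto_of_tendsto_of_tendsto_of_le_of_le (g := fun k => -(1 + S (k+1))⁻¹)
      (h := fun k => (1 + S (k+1))⁻¹) (by simpa using hg.neg) hg ?_ ?_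
    · intro k; have := habs k; cases abs_le.1 this; assumption
    · intro k; exact (abs_le.1 (habs k)).2
  have hsum := h x hx0
  have heq : (fun k => |b k * x k|) = fun k => |b k| / (1 + S (k + 1)) := by
    funext k
    rw [hxdef]
    rcases eq_or_ne (b k) 0 with hbk | hbk
    · simp [hbk]
    · rw [abs_mul, abs_div, abs_of_pos (hpos k), div_eq_mul_inv, div_eq_mul_inv]
      rcases Real.sign_apply_eq_of_ne_zero (b k) hbk with hs | hs <;> rw [hs] <;> norm_num
  rw [heq] at hsum
  -- derive contradiction via vanishing
  have hvan := summable_iff_vanishing.1 hsum (Set.Iio (1/2 : ℝ))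
    (Iio_mem_nhds (by norm_num))
  obtain ⟨s, hs⟩ := hvan
  set m : ℕ := if hse : s.Nonempty then s.max' hse + 1 else 0 with hmdef
  have hsm : ∀ i ∈ s, i < m := by
    intro i hi
    rw [hmdef]
    rw [dif_pos ⟨i, hi⟩]
    exact Nat.lt_succ_of_le (s.le_max' i hi)
  -- choose n with S n ≥ 1 + 2 * S m and n ≥ m
  obtain ⟨n₁, hn₁⟩ := (tendsto_atTop.1 hStop (1 + 2 * S m)).exists_forall_of_atTop
  set n : ℕ := max n₁ m with hndef
  have hSn : 1 + 2 * S m ≤ S n := hn₁ n (le_max_left _ _)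
  have hmn : m ≤ n := le_max_right _ _
  have hdisj : Disjoint (Finset.Ico m n) s := by
    rw [Finset.disjoint_left]
    intro i hi his
    exact absurd (hsm i his) (not_lt.2 (Finset.mem_Ico.1 hi).1)
  have hmem := hs (Finset.Ico m n) hdisj
  rw [Set.mem_Iio] at hmem
  -- lower bound the sum
  have hposn : (0:ℝ) < 1 + S n := by linarith [hS0 n]
  have hlb : (S n - S m) / (1 + S n) ≤ ∑ k ∈ Finset.Ico m n, |b k| / (1 + S (k + 1)) := by
    have h1 : ∀ k ∈ Finset.Ico m n, |b k| / (1 + S n) ≤ |b k| / (1 + S (k + 1)) := by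
      intro k hk
      apply div_le_div_of_nonneg_left (abs_nonneg _) (hpos k)
      have : k + 1 ≤ n := (Finset.mem_Ico.1 hk).2
      linarith [hSmono this]
    calc (S n - S m) / (1 + S n)
        = (∑ k ∈ Finset.Ico m n, |b k|) / (1 + S n) := by
          rw [hSdef]; rw [Finset.sum_Ico_eq_sub _ hmn]
      _ = ∑ k ∈ Finset.Ico m n, |b k| / (1 + S n) := by rw [Finset.sum_div]
      _ ≤ _ := Finset.sum_le_sum h1
  have hhalf : (1:ℝ)/2 ≤ (S n - S m) / (1 + S n) := by
    rw [div_le_div_iff₀ (by norm_num) hposn]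
    linarith
  linarith

lemma tendsto_zero_of_eventually_zero {g : ℕ → ℝ} (h : ∀ᶠ k in atTop, g k = 0) :
    Tendsto g atTop (𝓝 0) :=
  tendsto_const_nhds.congr' (h.mono fun _ hk => hk.symm)

noncomputable def mkC0 (x : ℕ → ℝ) (hx : Tendsto x atTop (𝓝 0)) : C₀(ℕ, ℝ) :=
  ⟨⟨x, continuous_of_discreteTopology⟩, by rwa [cocompact_eq_atTop]⟩

@[simp] lemma mkC0_apply (x : ℕ → ℝ) (hx : Tendsto x atTop (𝓝 0)) (k : ℕ) :
    mkC0 x hx k = x k := rfl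

lemma c0_abs_le (f : C₀(ℕ, ℝ)) (k : ℕ) : |f k| ≤ ‖f‖ := by
  have := BoundedContinuousFunction.norm_coe_le_norm f.toBCF k
  rwa [ZeroAtInftyContinuousMap.norm_toBCF_eq_norm, Real.norm_eq_abs] at this

lemma rowSummable (b : ℕ → ℝ) (hb : Summable fun k => |b k|) (f : C₀(ℕ, ℝ)) :
    Summable fun k => |b k * f k| :=
  Summable.of_nonneg_of_le (fun _ => abs_nonneg _)
    (fun k => by rw [abs_mul]; exact mul_le_mul_of_nonneg_left (c0_abs_le f k) (abs_nonneg _))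
    (hb.mul_right ‖f‖)

noncomputable def rowCLM (b : ℕ → ℝ) (hb : Summable fun k => |b k|) : C₀(ℕ, ℝ) →L[ℝ] ℝ :=
  LinearMap.mkContinuous
    { toFun := fun f => ∑' k, b k * f k
      map_add' := fun f g => by
        simp only [ZeroAtInftyContinuousMap.coe_add, Pi.add_apply]
        rw [← Summable.tsum_add ((rowSummable b hb f).of_abs) ((rowSummable b hb g).of_abs)]
        congr 1; funext k; ring
      map_smul' := fun c f => by
        simp only [ZeroAtInftyContinuousMap.coe_smul, Pi.smul_apply, smul_eq_mul,
          RingHom.id_apply]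
        rw [← tsum_mul_left]
        congr 1; funext k; ring }
    (∑' k, |b k|)
    (fun f => by
      simp only [LinearMap.coe_mk, AddHom.coe_mk]
      calc ‖∑' k, b k * f k‖ ≤ ∑' k, ‖b k * f k‖ :=
            norm_tsum_le_tsum_norm (by simpa only [Real.norm_eq_abs, abs_mul] using rowSummable b hb f)
        _ ≤ ∑' k, |b k| * ‖f‖ :=
            Summable.tsum_le_tsum (fun k => by
                rw [Real.norm_eq_abs, abs_mul]
                exact mul_le_mul_of_nonneg_left (c0_abs_le f k) (abs_nonneg _))
              (by simpa only [Real.norm_eq_abs, abs_mul] using rowSummable b hb f) (hb.mul_right _)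
        _ = (∑' k, |b k|) * ‖f‖ := tsum_mul_right)

lemma rowCLM_apply (b : ℕ → ℝ) (hb : Summable fun k => |b k|) (f : C₀(ℕ, ℝ)) :
    rowCLM b hb f = ∑' k, b k * f k := rfl

lemma unif_bound (a : ℕ → ℕ → ℝ) (hrow : ∀ n, Summable fun k => |a n k|)
    (h : ∀ x : ℕ → ℝ, Tendsto x atTop (𝓝 0) →
      ∃ l : ℝ, Tendsto (fun n => ∑' k, a n k * x k) atTop (𝓝 l)) :
    ∃ M : ℝ, ∀ n, (∑' k, |a n k|) ≤ M := by
  set T : ℕ → C₀(ℕ, ℝ) →L[ℝ] ℝ := fun n => rowCLM (a n) (hrow n) with hT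
  have hpt : ∀ f : C₀(ℕ, ℝ), ∃ C, ∀ n, ‖T n f‖ ≤ C := by
    intro f
    have hf0 : Tendsto (⇑f) atTop (𝓝 0) := by
      have := zero_at_infty f
      rwa [cocompact_eq_atTop] at this
    obtain ⟨l, hl⟩ := h f hf0
    obtain ⟨C, hC⟩ := hl.abs.bddAbove_range
    refine ⟨C, fun n => ?_⟩
    rw [hT, rowCLM_apply, Real.norm_eq_abs]
    exact hC (Set.mem_range_self n)
  obtain ⟨C', hC'⟩ := banach_steinhaus hpt
  refine ⟨C', fun n => ?_⟩
  apply Summable.tsum_le_of_sum_le (hrow n)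
  intro s
  set g : ℕ → ℝ := fun k => if k ∈ s then Real.sign (a n k) else 0 with hgdef
  have hgz : ∀ᶠ k in atTop, g k = 0 := by
    refine Filter.eventually_atTop.2 ⟨(if hse : s.Nonempty then s.max' hse + 1 else 0), ?_⟩
    intro k hk
    rw [hgdef]
    simp only
    rw [if_neg]
    intro hks
    have : k < dite s.Nonempty (fun hse => s.max' hse + 1) fun _ => 0 := by
      rw [dif_pos ⟨k, hks⟩]; exact Nat.lt_succ_of_le (s.le_max' k hks)
    omega
  have hg0 := tendsto_zero_of_eventually_zero hgz
  set f : C₀(ℕ, ℝ) := mkC0 g hg0 with hf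
  have hfnorm : ‖f‖ ≤ 1 := by
    have h1 : ‖f.toBCF‖ ≤ 1 := by
      refine (BoundedContinuousFunction.norm_le (by norm_num)).2 fun k => ?_
      rw [Real.norm_eq_abs]
      show |g k| ≤ 1
      rw [hgdef]; simp only
      split
      · exact abs_sgn_le _
      · simp
    rwa [ZeroAtInftyContinuousMap.norm_toBCF_eq_norm] at h1
  have hval : T n f = ∑ k ∈ s, |a n k| := by
    rw [hT, rowCLM_apply]
    rw [tsum_eq_sum (s := s) (fun k hk => by
      show a n k * g k = 0
      rw [hgdef]; simp [hk])]
    refine Finset.sum_congr rfl fun k hk => ?_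
    show a n k * g k = |a n k|
    rw [hgdef]; simp only [if_pos hk]; exact sgn_abs _
  calc ∑ k ∈ s, |a n k| = T n f := hval.symm
    _ ≤ |T n f| := le_abs_self _
    _ ≤ ‖T n‖ * ‖f‖ := by rw [← Real.norm_eq_abs]; exact (T n).le_opNorm f
    _ ≤ C' * 1 := mul_le_mul (hC' n) hfnorm (norm_nonneg _) ((norm_nonneg _).trans (hC' n))
    _ = C' := mul_one _

lemma backward_key (a : ℕ → ℕ → ℝ)
    (hrow : ∀ n, Summable fun k => |a n k|)
    {M : ℝ} (hM : ∀ n, (∑' k, |a n k|) ≤ M)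
    (l : ℕ → ℝ) (hl : ∀ k, Tendsto (fun n => a n k) atTop (𝓝 (l k)))
    (x : ℕ → ℝ) (hx : Tendsto x atTop (𝓝 0)) :
    (∀ n, Summable fun k => |a n k * x k|) ∧
      ∃ L : ℝ, Tendsto (fun n => ∑' k, a n k * x k) atTop (𝓝 L) := by
  have hM0 : 0 ≤ M := le_trans (tsum_nonneg fun k => abs_nonneg _) (hM 0)
  have hlF : ∀ s : Finset ℕ, ∑ k ∈ s, |l k| ≤ M := by
    intro s
    have hn : Tendsto (fun n => ∑ k ∈ s, |a n k|) atTop (𝓝 (∑ k ∈ s, |l k|)) :=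
      tendsto_finset_sum s fun k _ => (hl k).abs
    refine le_of_tendsto hn (Eventually.of_forall fun n => ?_)
    calc ∑ k ∈ s, |a n k| ≤ ∑' k, |a n k| :=
          Summable.sum_le_tsum s (fun k _ => abs_nonneg _) (hrow n)
      _ ≤ M := hM n
  have hlsum : Summable fun k => |l k| :=
    summable_of_sum_range_le (fun _ => abs_nonneg _) fun n => hlF (Finset.range n)
  have hltsum : (∑' k, |l k|) ≤ M := Summable.tsum_le_of_sum_le hlsum hlF
  obtain ⟨B, hB⟩ := hx.abs.bddAbove_range
  have hxb : ∀ k, |x k| ≤ B := fun k => hB (Set.mem_range_self k)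
  have hB0 : 0 ≤ B := le_trans (abs_nonneg _) (hxb 0)
  have hsumn : ∀ n, Summable fun k => |a n k * x k| := fun n =>
    Summable.of_nonneg_of_le (fun _ => abs_nonneg _)
      (fun k => by rw [abs_mul]; exact mul_le_mul_of_nonneg_left (hxb k) (abs_nonneg _))
      ((hrow n).mul_right B)
  have hsuml : Summable fun k => |l k * x k| :=
    Summable.of_nonneg_of_le (fun _ => abs_nonneg _)
      (fun k => by rw [abs_mul]; exact mul_le_mul_of_nonneg_left (hxb k) (abs_nonneg _))
      (hlsum.mul_right B)
  refine ⟨hsumn, ∑' k, l k * x k, ?_⟩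
  rw [Metric.tendsto_atTop]
  intro ε hε
  set δ := ε / (2 * (2 * M + 1)) with hδ
  have hδpos : 0 < δ := by positivity
  obtain ⟨K, hK⟩ := Metric.tendsto_atTop.1 hx δ hδpos
  have hxδ : ∀ k, K ≤ k → |x k| ≤ δ := by
    intro k hk
    have := hK k hk
    rw [Real.dist_eq, sub_zero] at this
    exact this.le
  have hfin : Tendsto (fun n => ∑ k ∈ Finset.range K, |(a n k - l k) * x k|) atTop (𝓝 0) := by
    have hterm : ∀ k ∈ Finset.range K,
        Tendsto (fun n => |(a n k - l k) * x k|) atTop (𝓝 0) := by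
      intro k _
      have h1 : Tendsto (fun n => a n k - l k) atTop (𝓝 0) := by
        simpa using (hl k).sub_const (l k)
      have h2 : Tendsto (fun n => (a n k - l k) * x k) atTop (𝓝 0) := by
        simpa using h1.mul_const (x k)
      simpa using h2.abs
    have h0 := tendsto_finset_sum (Finset.range K) hterm
    simpa using h0
  obtain ⟨N, hN⟩ := Metric.tendsto_atTop.1 hfin (ε / 2) (by positivity)
  refine ⟨N, fun n hn => ?_⟩
  have hdiffsum : Summable fun k => |(a n k - l k) * x k| := by
    refine Summable.of_nonneg_of_le (fun _ => abs_nonneg _) (fun k => ?_)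
      (((hrow n).add hlsum).mul_right B)
    rw [abs_mul]
    exact mul_le_mul (abs_sub _ _) (hxb k) (abs_nonneg _) (by positivity)
  rw [Real.dist_eq]
  have heq : (∑' k, a n k * x k) - (∑' k, l k * x k) = ∑' k, (a n k - l k) * x k := by
    rw [← Summable.tsum_sub (hsumn n).of_abs hsuml.of_abs]
    congr 1; funext k; ring
  rw [heq]
  have h1 : |∑' k, (a n k - l k) * x k| ≤ ∑' k, |(a n k - l k) * x k| := by
    simpa only [Real.norm_eq_abs] using
      norm_tsum_le_tsum_norm (f := fun k => (a n k - l k) * x k)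
        (by simpa only [Real.norm_eq_abs] using hdiffsum)
  have hsplit : (∑' k, |(a n k - l k) * x k|) =
      (∑ k ∈ Finset.range K, |(a n k - l k) * x k|) +
        ∑' j, |(a n (j + K) - l (j + K)) * x (j + K)| :=
    (Summable.sum_add_tsum_nat_add K hdiffsum).symm
  have htailA : (∑' j, |a n (j + K)|) ≤ M := by
    have h2 := Summable.sum_add_tsum_nat_add K (hrow n)
    have h3 : (0:ℝ) ≤ ∑ k ∈ Finset.range K, |a n k| :=
      Finset.sum_nonneg fun _ _ => abs_nonneg _
    have h4 := hM n
    linarith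
  have htailL : (∑' j, |l (j + K)|) ≤ M := by
    have h2 := Summable.sum_add_tsum_nat_add K hlsum
    have h3 : (0:ℝ) ≤ ∑ k ∈ Finset.range K, |l k| :=
      Finset.sum_nonneg fun _ _ => abs_nonneg _
    linarith
  have htail : (∑' j, |(a n (j + K) - l (j + K)) * x (j + K)|) ≤ 2 * M * δ := by
    have hbnd : ∀ j, |(a n (j + K) - l (j + K)) * x (j + K)| ≤
        (|a n (j + K)| + |l (j + K)|) * δ := by
      intro j
      rw [abs_mul]
      exact mul_le_mul (abs_sub _ _) (hxδ _ (Nat.le_add_left K j)) (abs_nonneg _)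
        (by positivity)
    have hsA : Summable fun j => |a n (j + K)| := (summable_nat_add_iff K).2 (hrow n)
    have hsL : Summable fun j => |l (j + K)| := (summable_nat_add_iff K).2 hlsum
    calc (∑' j, |(a n (j + K) - l (j + K)) * x (j + K)|)
        ≤ ∑' j, (|a n (j + K)| + |l (j + K)|) * δ :=
          Summable.tsum_le_tsum hbnd ((summable_nat_add_iff K).2 hdiffsum)
            ((hsA.add hsL).mul_right δ)
      _ = ((∑' j, |a n (j + K)|) + ∑' j, |l (j + K)|) * δ := by
          rw [tsum_mul_right, Summable.tsum_add hsA hsL]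
      _ ≤ 2 * M * δ := by nlinarith
  have hfinN : (∑ k ∈ Finset.range K, |(a n k - l k) * x k|) < ε / 2 := by
    have := hN n hn
    rw [Real.dist_eq, sub_zero] at this
    exact lt_of_abs_lt this
  have hδε : 2 * M * δ ≤ ε / 2 := by
    have hne : (2 * M + 1) ≠ 0 := by positivity
    have h5 : (2 * M + 1) * δ = ε / 2 := by
      rw [hδ]; field_simp
    nlinarith
  have h6 : (∑' k, |(a n k - l k) * x k|) < ε := by
    rw [hsplit]; linarith
  linarith

/-- The set of null real sequences. -/
def seqC0 : Set (ℕ → ℝ) := {y | Filter.Tendsto y Filter.atTop (nhds 0)}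

/-- The set of convergent real sequences. -/
def seqC : Set (ℕ → ℝ) := {y | ∃ l : ℝ, Filter.Tendsto y Filter.atTop (nhds l)}

/-- The set of bounded real sequences. -/
def seqLinf : Set (ℕ → ℝ) := {y | ∃ M : ℝ, ∀ n, |y n| ≤ M}

/-- The set of absolutely summable real sequences. -/
def seqL1 : Set (ℕ → ℝ) := {y | Summable fun n => |y n|}

/-- `a ∈ (X : Y)`: for every `x ∈ X` the series `Σ_k a(n,k)·x_k` converges
absolutely for each `n`, and the transformed sequence belongs to `Y`. -/
def MatClass (a : ℕ → ℕ → ℝ) (X Y : Set (ℕ → ℝ)) : Prop :=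
  ∀ x ∈ X, (∀ n, Summable fun k => |a n k * x k|) ∧ (fun n => ∑' k, a n k * x k) ∈ Y

/-- `a ∈ (c₀ : c)` iff (4.2) `Σ_k |a(n,k)|` converges for each `n`
with `sup_n Σ_k |a(n,k)| < ∞`, and (4.3) `lim_n a(n,k)` exists for each `k`. -/
theorem matclass_c0_c (a : ℕ → ℕ → ℝ) :
    MatClass a seqC0 seqC ↔
      ((∀ n, Summable fun k => |a n k|) ∧ ∃ M : ℝ, ∀ n, (∑' k, |a n k|) ≤ M) ∧
      (∀ k, ∃ l : ℝ, Tendsto (fun n => a n k) atTop (nhds l)) := by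
  constructor
  · intro h
    have hrow : ∀ n, Summable fun k => |a n k| := by
      intro n
      apply row_l1
      intro x hx
      exact (h x hx).1 n
    refine ⟨⟨hrow, ?_⟩, ?_⟩
    · exact unif_bound a hrow fun x hx => (h x hx).2
    · intro k
      set x : ℕ → ℝ := fun j => if j = k then 1 else 0 with hxd
      have hx0 : Tendsto x atTop (𝓝 0) :=
        tendsto_zero_of_eventually_zero (Filter.eventually_atTop.2
          ⟨k + 1, fun j hj => by rw [hxd]; simp only [if_neg (by omega : j ≠ k)]⟩)
      obtain ⟨-, lx, hlx⟩ := h x hx0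
      refine ⟨lx, ?_⟩
      have hval : ∀ n, (∑' j, a n j * x j) = a n k := by
        intro n
        rw [tsum_eq_single k (fun j hj => by rw [hxd]; simp [hj])]
        rw [hxd]; simp
      exact hlx.congr hval
  · rintro ⟨⟨hrow, M, hM⟩, hcol⟩
    choose l hl using hcol
    intro x hx
    exact backward_key a hrow hM l hl x hx
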